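/- There exists a constant b_c < ∞, depending only on b₀, ρ₀ and ‖c‖_v, such that for every α ∈ (0,1) and all x, y ∈ ℝ^d, |h_α(x) − h_α(y)| ≤ b_c ( v(x) + v(y) ), where h_α(x) := Σ_{t=0}^∞ α^t P^t c(x); in particular this bound is uniform over the discount factor α. -/
import Mathlib


open MeasureTheory ProbabilityTheory Filter Topology

/-- Iterates of a Markov kernel: `kiter P t = P^t`, with `P^0` the identity kernel. -/
noncomputable def kiter {α : Type*} [MeasurableSpace α] (P : Kernel α α) : ℕ → Kernel α α
  | 0 => Kernel.id
  | t + 1 => (kiter P t).comp P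

set_option maxHeartbeats 1000000 in
/-- There is a constant `b_c` such that uniformly over `α ∈ (0,1)` and
all `x, y`, `|h_α(x) − h_α(y)| ≤ b_c (v(x) + v(y))`, where `h_α(x) = ∑ α^t P^t c(x)`. -/
theorem discounted_value_difference_bound
    (d : ℕ) (P : Kernel (Fin d → ℝ) (Fin d → ℝ)) [IsMarkovKernel P]
    (π : Measure (Fin d → ℝ)) [IsProbabilityMeasure π]
    (hinv : π.bind (⇑P) = π)
    (v : (Fin d → ℝ) → ℝ) (hv1 : ∀ x, 1 ≤ v x) (hvmeas : Measurable v)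
    (hvint : Integrable v π)
    (b₀ ρ₀ : ℝ) (hρ₀ : ρ₀ ∈ Set.Ioo (0 : ℝ) 1)
    (herg : ∀ f : (Fin d → ℝ) → ℝ, Measurable f → ∀ C : ℝ, (∀ x, |f x| ≤ C * v x) →
      Integrable f π ∧ (∀ t x, Integrable f (kiter P t x)) ∧
        ∀ t x, |(∫ y, f y ∂(kiter P t x)) - ∫ y, f y ∂π| ≤ b₀ * ρ₀ ^ t * C * v x)
    (c : (Fin d → ℝ) → ℝ) (hcmeas : Measurable c) (Cc : ℝ) (hc : ∀ x, |c x| ≤ Cc * v x) :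
    ∃ bc : ℝ, ∀ α ∈ Set.Ioo (0 : ℝ) 1, ∀ x y,
      Summable (fun t : ℕ => |α ^ t * ∫ z, c z ∂(kiter P t x)|) ∧
      Summable (fun t : ℕ => |α ^ t * ∫ z, c z ∂(kiter P t y)|) ∧
      |(∑' t : ℕ, α ^ t * ∫ z, c z ∂(kiter P t x)) -
          ∑' t : ℕ, α ^ t * ∫ z, c z ∂(kiter P t y)| ≤ bc * (v x + v y) := by

  obtain ⟨hρ0, hρ1⟩ := hρ₀
  obtain ⟨-, -, hcb⟩ := herg c hcmeas Cc hc
  set cb := ∫ z, c z ∂π with hcbdef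
  have hv0 : (0:ℝ) < v 0 := lt_of_lt_of_le one_pos (hv1 0)
  have hbC : 0 ≤ b₀ * Cc := by
    have h := hcb 0 0
    have h0 : (0:ℝ) ≤ b₀ * ρ₀ ^ 0 * Cc * v 0 := le_trans (abs_nonneg _) h
    simp only [pow_zero, mul_one] at h0
    nlinarith
  refine ⟨b₀ * Cc / (1 - ρ₀), ?_⟩
  rintro α ⟨hα0, hα1⟩ x y
  have hvx : (0:ℝ) < v x := lt_of_lt_of_le one_pos (hv1 x)
  have hvy : (0:ℝ) < v y := lt_of_lt_of_le one_pos (hv1 y)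
  have key : ∀ z : Fin d → ℝ, Summable (fun t : ℕ => |α ^ t * ∫ w, c w ∂(kiter P t z)|) := by
    intro z
    refine Summable.of_nonneg_of_le (fun t => abs_nonneg _) ?_
      ((summable_geometric_of_lt_one hα0.le hα1).mul_right (|cb| + b₀ * Cc * v z))
    · intro t
      rw [abs_mul, abs_pow, abs_of_pos hα0]
      apply mul_le_mul_of_nonneg_left _ (pow_nonneg hα0.le t)
      have h1 : |(∫ w, c w ∂(kiter P t z)) - cb| ≤ b₀ * ρ₀ ^ t * Cc * v z := hcb t z
      have hρt : ρ₀ ^ t ≤ 1 := pow_le_one₀ hρ0.le hρ1.le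
      have hρtn : (0:ℝ) ≤ ρ₀ ^ t := pow_nonneg hρ0.le t
      have hvz : (0:ℝ) < v z := lt_of_lt_of_le one_pos (hv1 z)
      have h3 : |∫ w, c w ∂(kiter P t z)| ≤ |(∫ w, c w ∂(kiter P t z)) - cb| + |cb| := by
        calc |∫ w, c w ∂(kiter P t z)| = |((∫ w, c w ∂(kiter P t z)) - cb) + cb| := by ring_nf
          _ ≤ _ := abs_add_le _ _
      nlinarith [mul_nonneg (mul_nonneg hbC hvz.le) (sub_nonneg.mpr hρt)]
  have hsx : Summable (fun t : ℕ => α ^ t * ∫ z, c z ∂(kiter P t x)) :=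
    summable_abs_iff.mp (key x)
  have hsy : Summable (fun t : ℕ => α ^ t * ∫ z, c z ∂(kiter P t y)) :=
    summable_abs_iff.mp (key y)
  refine ⟨key x, key y, ?_⟩
  rw [← Summable.tsum_sub hsx hsy]
  have hbound : ∀ t : ℕ, |α ^ t * (∫ z, c z ∂(kiter P t x)) - α ^ t * ∫ z, c z ∂(kiter P t y)|
      ≤ ρ₀ ^ t * (b₀ * Cc * (v x + v y)) := by
    intro t
    have h1 := hcb t x
    have h2 := hcb t y
    have hαt : α ^ t ≤ 1 := pow_le_one₀ hα0.le hα1.le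
    have hαtn : (0:ℝ) ≤ α ^ t := pow_nonneg hα0.le t
    have heq : α ^ t * (∫ z, c z ∂(kiter P t x)) - α ^ t * ∫ z, c z ∂(kiter P t y)
        = α ^ t * (((∫ z, c z ∂(kiter P t x)) - cb) - ((∫ z, c z ∂(kiter P t y)) - cb)) := by
      ring
    rw [heq, abs_mul, abs_pow, abs_of_pos hα0]
    have h3 : |((∫ z, c z ∂(kiter P t x)) - cb) - ((∫ z, c z ∂(kiter P t y)) - cb)|
        ≤ b₀ * ρ₀ ^ t * Cc * v x + b₀ * ρ₀ ^ t * Cc * v y :=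
      le_trans (abs_sub _ _) (add_le_add h1 h2)
    have hρtn : (0:ℝ) ≤ ρ₀ ^ t := pow_nonneg hρ0.le t
    nlinarith [abs_nonneg (((∫ z, c z ∂(kiter P t x)) - cb) - ((∫ z, c z ∂(kiter P t y)) - cb))]
  have hfsum : Summable (fun t : ℕ => α ^ t * (∫ z, c z ∂(kiter P t x)) -
      α ^ t * ∫ z, c z ∂(kiter P t y)) := hsx.sub hsy
  have habs : Summable (fun t : ℕ => |α ^ t * (∫ z, c z ∂(kiter P t x)) -
      α ^ t * ∫ z, c z ∂(kiter P t y)|) := summable_abs_iff.mpr hfsum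
  have hsum2 : Summable (fun t : ℕ => ρ₀ ^ t * (b₀ * Cc * (v x + v y))) :=
    (summable_geometric_of_lt_one hρ0.le hρ1).mul_right _
  calc |∑' t : ℕ, (α ^ t * (∫ z, c z ∂(kiter P t x)) - α ^ t * ∫ z, c z ∂(kiter P t y))|
      ≤ ∑' t : ℕ, |α ^ t * (∫ z, c z ∂(kiter P t x)) - α ^ t * ∫ z, c z ∂(kiter P t y)| := by
        have h := norm_tsum_le_tsum_norm (f := fun t : ℕ =>
          α ^ t * (∫ z, c z ∂(kiter P t x)) - α ^ t * ∫ z, c z ∂(kiter P t y))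
          (by simpa [Real.norm_eq_abs] using habs)
        simpa [Real.norm_eq_abs] using h
    _ ≤ ∑' t : ℕ, ρ₀ ^ t * (b₀ * Cc * (v x + v y)) := Summable.tsum_le_tsum hbound habs hsum2
    _ = (1 - ρ₀)⁻¹ * (b₀ * Cc * (v x + v y)) := by
        rw [tsum_mul_right, tsum_geometric_of_lt_one hρ0.le hρ1, mul_comm]
    _ = b₀ * Cc / (1 - ρ₀) * (v x + v y) := by ring
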